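/- Minkowski's theorem via the Funk transform: Let Ω ⊂ ℝ³ be a compact convex body with smooth boundary and 0 in its interior, with width function B and circumference function U satisfying U(ω) = (1/2)∫_{S²∩ω^⊥} B ds. If U is constant on S², then B is constant on S²; conversely if B ≡ c then U ≡ πc. Hence Ω has constant width iff it has constant circumference. -/

import Mathlib

open Real Metric MeasureTheory intervalIntegral
open scoped RealInnerProductSpace

noncomputable def Jint (f : ℝ → ℝ) (t : ℝ) : ℝ :=
  ∫ α in (0:ℝ)..π, Real.sin α * ∫ φ in (0:ℝ)..(2*π), f (t * Real.sin α * Real.sin φ)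

lemma sin_even_pow_two_pi (n : ℕ) :
    (∫ φ in (0:ℝ)..(2*π), Real.sin φ ^ (2*n)) = 2 * ∫ x in (0:ℝ)..π, Real.sin x ^ (2*n) := by
  have h1 : (∫ φ in (0:ℝ)..π, Real.sin φ ^ (2*n)) + (∫ φ in π..(2*π), Real.sin φ ^ (2*n))
      = ∫ φ in (0:ℝ)..(2*π), Real.sin φ ^ (2*n) := by
    apply integral_add_adjacent_intervals <;> exact (Continuous.intervalIntegrable (by fun_prop) _ _)
  have h2 : (∫ φ in π..(2*π), Real.sin φ ^ (2*n)) = ∫ x in (0:ℝ)..π, Real.sin x ^ (2*n) := by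
    have key : (∫ x in (0:ℝ)..π, Real.sin (x + π) ^ (2*n))
        = ∫ x in (0+π)..(π+π), Real.sin x ^ (2*n) :=
      intervalIntegral.integral_comp_add_right (a := (0:ℝ)) (b := π)
        (f := fun x => Real.sin x ^ (2*n)) π
    rw [zero_add, (by ring : π + π = 2*π)] at key
    rw [← key]
    apply intervalIntegral.integral_congr
    intro x _
    simp [Real.sin_add_pi, neg_pow, pow_mul]
  linarith

lemma sin_pow_prod (n : ℕ) :
    (∫ x in (0:ℝ)..π, Real.sin x ^ (2*n)) * (∫ x in (0:ℝ)..π, Real.sin x ^ (2*n+1))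
      = 2 * π / (2*n+1) := by
  induction n with
  | zero => simp [integral_sin]; ring
  | succ k ih =>
    have e1 : (∫ x in (0:ℝ)..π, Real.sin x ^ (2*(k+1)))
        = (((2*k:ℕ):ℝ)+1)/(((2*k:ℕ):ℝ)+2) * ∫ x in (0:ℝ)..π, Real.sin x ^ (2*k) := by
      rw [show 2*(k+1) = 2*k+2 by ring, integral_sin_pow]
      simp [Real.sin_pi, pow_succ]
    have e2 : (∫ x in (0:ℝ)..π, Real.sin x ^ (2*(k+1)+1))
        = (((2*k+1:ℕ):ℝ)+1)/(((2*k+1:ℕ):ℝ)+2) * ∫ x in (0:ℝ)..π, Real.sin x ^ (2*k+1) := by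
      rw [show 2*(k+1)+1 = (2*k+1)+2 by ring, integral_sin_pow]
      simp [Real.sin_pi, pow_succ]
    rw [e1, e2]
    push_cast
    have h3 : (2*(k:ℝ)+3) ≠ 0 := by positivity
    have h2 : (2*(k:ℝ)+2) ≠ 0 := by positivity
    have h1 : (2*(k:ℝ)+1) ≠ 0 := by positivity
    have lhs_eq : ((2*(k:ℝ)+1)/(2*(k:ℝ)+2) * ∫ x in (0:ℝ)..π, Real.sin x ^ (2*k))
        * ((2*(k:ℝ)+1+1)/(2*(k:ℝ)+1+2) * ∫ x in (0:ℝ)..π, Real.sin x ^ (2*k+1))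
        = (2*(k:ℝ)+1)/(2*(k:ℝ)+3)
          * ((∫ x in (0:ℝ)..π, Real.sin x ^ (2*k)) * ∫ x in (0:ℝ)..π, Real.sin x ^ (2*k+1)) := by
      field_simp
      ring
    rw [lhs_eq, ih]
    field_simp
    ring

lemma Jint_monomial (n : ℕ) (a t : ℝ) :
    t * Jint (fun u => a * u ^ (2*n)) t = 4 * π * ∫ u in (0:ℝ)..t, a * u ^ (2*n) := by
  have inner_eq : ∀ α : ℝ, (∫ φ in (0:ℝ)..(2*π), a * (t * Real.sin α * Real.sin φ) ^ (2*n))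
      = a * (t * Real.sin α) ^ (2*n) * (2 * ∫ x in (0:ℝ)..π, Real.sin x ^ (2*n)) := by
    intro α
    rw [← sin_even_pow_two_pi]
    rw [← intervalIntegral.integral_const_mul]
    apply intervalIntegral.integral_congr
    intro φ _
    rw [mul_pow]
    ring
  have outer : ∀ S : ℝ, (∫ α in (0:ℝ)..π, Real.sin α * (a * (t * Real.sin α) ^ (2*n) * (2 * S)))
      = (a * t ^ (2*n) * 2 * S) * ∫ α in (0:ℝ)..π, Real.sin α ^ (2*n+1) := by
    intro S
    rw [← intervalIntegral.integral_const_mul]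
    apply intervalIntegral.integral_congr
    intro α _
    simp only [mul_pow, pow_succ]
    ring
  have Jeq : Jint (fun u => a * u ^ (2*n)) t
      = ∫ α in (0:ℝ)..π, Real.sin α *
          (a * (t * Real.sin α) ^ (2*n) * (2 * ∫ x in (0:ℝ)..π, Real.sin x ^ (2*n))) := by
    unfold Jint
    exact intervalIntegral.integral_congr (fun α _ => by rw [inner_eq])
  have h1 : (2*(n:ℝ)+1) ≠ 0 := by positivity
  calc t * Jint (fun u => a * u ^ (2*n)) t
      = t * ((a * t ^ (2*n) * 2 * ∫ x in (0:ℝ)..π, Real.sin x ^ (2*n))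
          * ∫ α in (0:ℝ)..π, Real.sin α ^ (2*n+1)) := by rw [Jeq, outer]
    _ = a * t ^ (2*n+1) * 2 * ((∫ x in (0:ℝ)..π, Real.sin x ^ (2*n))
          * ∫ α in (0:ℝ)..π, Real.sin α ^ (2*n+1)) := by ring
    _ = a * t ^ (2*n+1) * 2 * (2 * π / (2*n+1)) := by rw [sin_pow_prod]
    _ = 4 * π * ∫ u in (0:ℝ)..t, a * u ^ (2*n) := by
        rw [intervalIntegral.integral_const_mul, integral_pow]
        push_cast
        field_simp
        ring

lemma Jint_sub (f g : ℝ → ℝ) (hf : Continuous f) (hg : Continuous g) (t : ℝ) :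
    Jint (fun u => f u - g u) t = Jint f t - Jint g t := by
  unfold Jint
  have hfi : ∀ α : ℝ, IntervalIntegrable (fun φ => f (t * Real.sin α * Real.sin φ))
      volume 0 (2*π) := fun α => (hf.comp (by fun_prop)).intervalIntegrable _ _
  have hgi : ∀ α : ℝ, IntervalIntegrable (fun φ => g (t * Real.sin α * Real.sin φ))
      volume 0 (2*π) := fun α => (hg.comp (by fun_prop)).intervalIntegrable _ _
  have step : ∀ α : ℝ, Real.sin α * (∫ φ in (0:ℝ)..(2*π),
        (f (t * Real.sin α * Real.sin φ) - g (t * Real.sin α * Real.sin φ)))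
      = Real.sin α * (∫ φ in (0:ℝ)..(2*π), f (t * Real.sin α * Real.sin φ))
        - Real.sin α * (∫ φ in (0:ℝ)..(2*π), g (t * Real.sin α * Real.sin φ)) := by
    intro α
    rw [intervalIntegral.integral_sub (hfi α) (hgi α)]
    ring
  simp_rw [step]
  apply intervalIntegral.integral_sub
  · apply Continuous.intervalIntegrable
    apply continuous_sin.mul
    apply intervalIntegral.continuous_parametric_intervalIntegral_of_continuous'
    fun_prop
  · apply Continuous.intervalIntegrable
    apply continuous_sin.mul
    apply intervalIntegral.continuous_parametric_intervalIntegral_of_continuous'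
    fun_prop

lemma Jint_bound (f : ℝ → ℝ) (hf : Continuous f) {t ε : ℝ} (ht : |t| ≤ 1) (hε : 0 ≤ ε)
    (hb : ∀ u : ℝ, |u| ≤ 1 → |f u| ≤ ε) : |Jint f t| ≤ 2 * π^2 * ε := by
  have harg : ∀ α φ : ℝ, |t * Real.sin α * Real.sin φ| ≤ 1 := by
    intro α φ
    rw [abs_mul, abs_mul]
    have h1 := Real.abs_sin_le_one α
    have h2 := Real.abs_sin_le_one φ
    have h4 : |t| * |Real.sin α| ≤ 1 :=
      mul_le_one₀ ht (abs_nonneg _) h1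
    exact mul_le_one₀ h4 (abs_nonneg _) h2
  have inner_b : ∀ α : ℝ, |∫ φ in (0:ℝ)..(2*π), f (t * Real.sin α * Real.sin φ)| ≤ ε * (2*π) := by
    intro α
    have := intervalIntegral.norm_integral_le_of_norm_le_const
      (a := (0:ℝ)) (b := 2*π) (C := ε)
      (f := fun φ => f (t * Real.sin α * Real.sin φ))
      (fun φ _ => hb _ (harg α φ))
    rw [Real.norm_eq_abs] at this
    calc |∫ φ in (0:ℝ)..(2*π), f (t * Real.sin α * Real.sin φ)| ≤ ε * |2*π - 0| := this
      _ = ε * (2*π) := by rw [sub_zero, abs_of_nonneg (by positivity)]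
  have outer := intervalIntegral.norm_integral_le_of_norm_le_const
    (a := (0:ℝ)) (b := π) (C := ε * (2*π))
    (f := fun α => Real.sin α * ∫ φ in (0:ℝ)..(2*π), f (t * Real.sin α * Real.sin φ))
    (by
      intro α _
      rw [Real.norm_eq_abs, abs_mul]
      have h1 := Real.abs_sin_le_one α
      have h2 := inner_b α
      have h3 : (0:ℝ) ≤ ε * (2*π) := by positivity
      nlinarith [abs_nonneg (∫ φ in (0:ℝ)..(2*π), f (t * Real.sin α * Real.sin φ))])
  rw [Real.norm_eq_abs] at outer
  calc |Jint f t| ≤ ε * (2*π) * |π - 0| := outer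
    _ = 2 * π^2 * ε := by rw [sub_zero, abs_of_nonneg Real.pi_pos.le]; ring

lemma Jint_poly (p : Polynomial ℝ) (t : ℝ) :
    t * Jint (fun u => p.eval (u^2)) t = 4 * π * ∫ u in (0:ℝ)..t, p.eval (u^2) := by
  induction p using Polynomial.induction_on' with
  | monomial n a =>
    have hfun : (fun u : ℝ => Polynomial.eval (u^2) (Polynomial.monomial n a))
        = fun u : ℝ => a * u ^ (2*n) := by
      funext u
      rw [Polynomial.eval_monomial, ← pow_mul]
    rw [hfun]
    exact Jint_monomial n a t
  | add p q hp hq =>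
    have hfun : (fun u : ℝ => Polynomial.eval (u^2) (p + q))
        = fun u : ℝ => Polynomial.eval (u^2) p + Polynomial.eval (u^2) q := by
      funext u; rw [Polynomial.eval_add]
    have hcp : Continuous fun u : ℝ => Polynomial.eval (u^2) p := by fun_prop
    have hcq : Continuous fun u : ℝ => Polynomial.eval (u^2) q := by fun_prop
    have hJ : Jint (fun u => Polynomial.eval (u^2) p + Polynomial.eval (u^2) q) t
        = Jint (fun u => Polynomial.eval (u^2) p) t + Jint (fun u => Polynomial.eval (u^2) q) t := by
      have := Jint_sub (fun u => Polynomial.eval (u^2) p + Polynomial.eval (u^2) q)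
        (fun u => Polynomial.eval (u^2) q) (by fun_prop) hcq t
      have h2 : (fun u : ℝ => (Polynomial.eval (u^2) p + Polynomial.eval (u^2) q)
          - Polynomial.eval (u^2) q) = fun u : ℝ => Polynomial.eval (u^2) p := by
        funext u; ring
      rw [h2] at this
      linarith
    have hint : (∫ u in (0:ℝ)..t, (Polynomial.eval (u^2) p + Polynomial.eval (u^2) q))
        = (∫ u in (0:ℝ)..t, Polynomial.eval (u^2) p)
          + ∫ u in (0:ℝ)..t, Polynomial.eval (u^2) q :=
      intervalIntegral.integral_add (hcp.intervalIntegrable _ _) (hcq.intervalIntegrable _ _)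
    rw [hfun, hJ, hint]
    ring_nf
    ring_nf at hp hq
    linarith

lemma abel_unique (h : ℝ → ℝ) (hc : Continuous h) (he : ∀ x, h (-x) = h x)
    (hz : ∀ s, s ∈ Set.Icc (0:ℝ) 1 → (∫ φ in (0:ℝ)..(2*π), h (s * Real.sin φ)) = 0) :
    h 1 = 0 := by
  -- Step A: Jint h t = 0 for t ∈ [0,1]
  have hJ0 : ∀ t, t ∈ Set.Icc (0:ℝ) 1 → Jint h t = 0 := by
    intro t ht
    have : Jint h t = ∫ α in (0:ℝ)..π, (0:ℝ) := by
      unfold Jint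
      apply intervalIntegral.integral_congr
      intro α hα
      rw [Set.uIcc_of_le Real.pi_pos.le] at hα
      have hs : t * Real.sin α ∈ Set.Icc (0:ℝ) 1 := by
        constructor
        · exact mul_nonneg ht.1 (Real.sin_nonneg_of_nonneg_of_le_pi hα.1 hα.2)
        · exact mul_le_one₀ ht.2 (Real.sin_nonneg_of_nonneg_of_le_pi hα.1 hα.2)
            (Real.sin_le_one α)
      have := hz _ hs
      simp only [mul_assoc] at this ⊢
      rw [this, mul_zero]
    rw [this, intervalIntegral.integral_zero]
  -- Step B: the primitive of h vanishes on [0,1]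
  have hF0 : ∀ t, t ∈ Set.Icc (0:ℝ) 1 → (∫ u in (0:ℝ)..t, h u) = 0 := by
    intro t ht
    have key : ∀ ε : ℝ, 0 < ε → |4 * π * ∫ u in (0:ℝ)..t, h u| ≤ (2*π^2 + 4*π) * ε := by
      intro ε hε
      obtain ⟨p, hp⟩ := exists_polynomial_near_of_continuousOn 0 1
        (fun x => h (Real.sqrt x)) (hc.comp Real.continuous_sqrt).continuousOn ε hε
      set q : ℝ → ℝ := fun u => p.eval (u^2) with hq
      have hqc : Continuous q := by fun_prop
      have happrox : ∀ u : ℝ, |u| ≤ 1 → |h u - q u| ≤ ε := by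
        intro u hu
        have h1 : h u = h (Real.sqrt (u^2)) := by
          rw [Real.sqrt_sq_eq_abs]
          rcases abs_cases u with ⟨h2, _⟩ | ⟨h2, _⟩
          · rw [h2]
          · rw [h2, he]
        have h2 : u^2 ∈ Set.Icc (0:ℝ) 1 := by
          constructor
          · positivity
          · nlinarith [abs_nonneg u, sq_abs u]
        have := hp (u^2) h2
        rw [h1]
        rw [abs_sub_comm]
        exact this.le
      -- |t * Jint (h - q) t| ≤ 2π²ε
      have hJdiff : |t * Jint (fun u => h u - q u) t| ≤ 2*π^2*ε := by
        have hb := Jint_bound (fun u => h u - q u) (by fun_prop)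
          (t := t) (ε := ε) (by rw [abs_of_nonneg ht.1]; exact ht.2) hε.le happrox
        calc |t * Jint (fun u => h u - q u) t| = |t| * |Jint (fun u => h u - q u) t| := abs_mul _ _
          _ ≤ 1 * (2*π^2*ε) := by
              apply mul_le_mul (by rw [abs_of_nonneg ht.1]; exact ht.2) hb (abs_nonneg _) one_pos.le
          _ = 2*π^2*ε := one_mul _
      have hsub := Jint_sub h q hc hqc t
      have hJq : t * Jint q t = - (t * Jint (fun u => h u - q u) t) := by
        rw [hsub, hJ0 t ht]; ring
      have hpoly := Jint_poly p t
      -- ∫ (h - q) bound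
      have hint_diff : |∫ u in (0:ℝ)..t, (h u - q u)| ≤ ε := by
        have := intervalIntegral.norm_integral_le_of_norm_le_const
          (a := (0:ℝ)) (b := t) (C := ε) (f := fun u => h u - q u)
          (by
            intro u hu
            rw [Real.norm_eq_abs]
            apply happrox
            rw [Set.uIoc_of_le ht.1] at hu
            rw [abs_of_pos (lt_of_lt_of_le hu.1 (le_refl u))]
            exact le_trans hu.2 ht.2)
        rw [Real.norm_eq_abs, sub_zero, abs_of_nonneg ht.1] at this
        calc |∫ u in (0:ℝ)..t, (h u - q u)| ≤ ε * t := this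
          _ ≤ ε * 1 := by nlinarith [ht.2]
          _ = ε := mul_one _
      have hint_split : (∫ u in (0:ℝ)..t, h u)
          = (∫ u in (0:ℝ)..t, (h u - q u)) + ∫ u in (0:ℝ)..t, q u := by
        rw [← intervalIntegral.integral_add (f := fun u => h u - q u) ((hc.sub hqc).intervalIntegrable _ _)
          (hqc.intervalIntegrable _ _)]
        apply intervalIntegral.integral_congr
        intro u _
        ring
      -- combine
      have : 4 * π * ∫ u in (0:ℝ)..t, h u
          = 4 * π * (∫ u in (0:ℝ)..t, (h u - q u)) - t * Jint (fun u => h u - q u) t := by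
        rw [hint_split]
        have : (4:ℝ) * π * ∫ u in (0:ℝ)..t, q u = t * Jint q t := (hpoly).symm
        rw [mul_add, this, hJq]
        ring
      rw [this]
      have h4 : |4 * π * ∫ u in (0:ℝ)..t, (h u - q u)| ≤ 4*π*ε := by
        rw [abs_mul]
        rw [abs_of_nonneg (by positivity : (0:ℝ) ≤ 4*π)]
        calc (4*π) * |∫ u in (0:ℝ)..t, (h u - q u)| ≤ (4*π) * ε := by
              apply mul_le_mul_of_nonneg_left hint_diff (by positivity)
          _ = 4*π*ε := rfl
      calc |4 * π * (∫ u in (0:ℝ)..t, (h u - q u)) - t * Jint (fun u => h u - q u) t|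
          ≤ |4 * π * ∫ u in (0:ℝ)..t, (h u - q u)| + |t * Jint (fun u => h u - q u) t| :=
            abs_sub _ _
        _ ≤ 4*π*ε + 2*π^2*ε := add_le_add h4 hJdiff
        _ = (2*π^2 + 4*π) * ε := by ring
    have habs : |4 * π * ∫ u in (0:ℝ)..t, h u| ≤ 0 := by
      by_contra hcon
      push_neg at hcon
      set x := |4 * π * ∫ u in (0:ℝ)..t, h u|
      have hK : (0:ℝ) < 2*π^2 + 4*π := by positivity
      have := key (x / (2 * (2*π^2 + 4*π))) (by positivity)
      have : x ≤ x / 2 := by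
        calc x ≤ (2*π^2 + 4*π) * (x / (2 * (2*π^2 + 4*π))) := this
          _ = x / 2 := by field_simp
      linarith
    have h4pi : (4:ℝ) * π ≠ 0 := by positivity
    have := abs_eq_zero.mp (le_antisymm habs (abs_nonneg _))
    exact (mul_eq_zero.mp this).resolve_left h4pi
  -- Step C: conclude h 1 = 0
  have hmid : ∀ u, u ∈ Set.Ioo (0:ℝ) 1 → h u = 0 := by
    intro u hu
    have hF : HasDerivAt (fun t => ∫ v in (0:ℝ)..t, h v) (h u) u := by
      exact intervalIntegral.integral_hasDerivAt_right (hc.intervalIntegrable _ _)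
        (hc.stronglyMeasurableAtFilter _ _) hc.continuousAt
    have hzero : HasDerivAt (fun t => ∫ v in (0:ℝ)..t, h v) 0 u := by
      have : (fun t => ∫ v in (0:ℝ)..t, h v) =ᶠ[nhds u] (fun _ => 0) := by
        filter_upwards [isOpen_Ioo.mem_nhds hu] with x hx
        exact hF0 x ⟨hx.1.le, hx.2.le⟩
      exact (hasDerivAt_const u (0:ℝ)).congr_of_eventuallyEq this
    have := hF.unique hzero
    linarith [this]
  have hne : (Filter.NeBot (nhdsWithin (1:ℝ) (Set.Ioo (0:ℝ) 1))) :=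
    right_nhdsWithin_Ioo_neBot one_pos
  have h1 : Filter.Tendsto h (nhdsWithin (1:ℝ) (Set.Ioo (0:ℝ) 1)) (nhds (h 1)) :=
    (hc.continuousAt).continuousWithinAt.tendsto
  have h2 : Filter.Tendsto h (nhdsWithin (1:ℝ) (Set.Ioo (0:ℝ) 1)) (nhds 0) := by
    apply Filter.Tendsto.congr' _ tendsto_const_nhds
    filter_upwards [self_mem_nhdsWithin] with x hx
    exact (hmid x hx).symm
  exact tendsto_nhds_unique h1 h2

lemma fubini_box {F : ℝ → ℝ → ℝ} (hF : Continuous fun q : ℝ × ℝ => F q.1 q.2)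
    {a b c d : ℝ} (hab : a ≤ b) (hcd : c ≤ d) :
    (∫ x in a..b, ∫ y in c..d, F x y) = ∫ y in c..d, ∫ x in a..b, F x y := by
  rw [intervalIntegral.integral_of_le hab, intervalIntegral.integral_of_le hcd]
  simp_rw [intervalIntegral.integral_of_le hcd, intervalIntegral.integral_of_le hab]
  apply MeasureTheory.integral_integral_swap
  rw [MeasureTheory.Measure.prod_restrict, ← MeasureTheory.Measure.volume_eq_prod]
  apply IntegrableOn.mono_set (t := Set.Icc a b ×ˢ Set.Icc c d)
  · exact (hF.continuousOn).integrableOn_compact (IsCompact.prod isCompact_Icc isCompact_Icc)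
  · exact Set.prod_mono Set.Ioc_subset_Icc_self Set.Ioc_subset_Icc_self

lemma shift_integral {g : ℝ → ℝ} (hg : Function.Periodic g (2*π)) (δ : ℝ) :
    (∫ ψ in (0:ℝ)..(2*π), g (ψ + δ)) = ∫ ψ in (0:ℝ)..(2*π), g ψ := by
  rw [intervalIntegral.integral_comp_add_right]
  have h := hg.intervalIntegral_add_eq δ 0
  rw [zero_add] at h
  rw [show (0:ℝ) + δ = δ by ring, show 2*π + δ = δ + 2*π by ring]
  exact h

lemma exists_angle (x y : ℝ) :
    ∃ δ, x = Real.sqrt (x^2+y^2) * Real.cos δ ∧ y = Real.sqrt (x^2+y^2) * Real.sin δ := by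
  by_cases h : x = 0 ∧ y = 0
  · exact ⟨0, by simp [h.1, h.2]⟩
  · have hz : (⟨x, y⟩ : ℂ) ≠ 0 := by
      intro hc
      rw [Complex.ext_iff] at hc
      exact h ⟨hc.1, hc.2⟩
    have habs : ‖(⟨x, y⟩ : ℂ)‖ = Real.sqrt (x^2+y^2) := by
      rw [Complex.norm_def, Complex.normSq_mk]
      ring_nf
    refine ⟨Complex.arg ⟨x, y⟩, ?_, ?_⟩
    · rw [Complex.cos_arg hz, habs]
      have : Real.sqrt (x^2+y^2) ≠ 0 := by
        rw [← habs]; simpa using hz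
      field_simp
    · rw [Complex.sin_arg, habs]
      have : Real.sqrt (x^2+y^2) ≠ 0 := by
        rw [← habs]; simpa using hz
      field_simp

section aux
variable {E : Type*} [NormedAddCommGroup E] [InnerProductSpace ℝ E]

lemma inner_triple {p e₁ e₂ : E} (hp : ‖p‖ = 1) (h1 : ‖e₁‖ = 1) (h2 : ‖e₂‖ = 1)
    (h12 : ⟪e₁, e₂⟫ = 0) (h1p : ⟪e₁, p⟫ = 0) (h2p : ⟪e₂, p⟫ = 0)
    (a x y a' x' y' : ℝ) :
    ⟪a • p + x • e₁ + y • e₂, a' • p + x' • e₁ + y' • e₂⟫ = a * a' + x * x' + y * y' := by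
  have hpp : ⟪p, p⟫ = 1 := by
    rw [real_inner_self_eq_norm_sq, hp]; norm_num
  have h11 : ⟪e₁, e₁⟫ = 1 := by rw [real_inner_self_eq_norm_sq, h1]; norm_num
  have h22 : ⟪e₂, e₂⟫ = 1 := by rw [real_inner_self_eq_norm_sq, h2]; norm_num
  have h21 : ⟪e₂, e₁⟫ = 0 := by rw [real_inner_comm]; exact h12
  have hp1 : ⟪p, e₁⟫ = 0 := by rw [real_inner_comm]; exact h1p
  have hp2 : ⟪p, e₂⟫ = 0 := by rw [real_inner_comm]; exact h2p
  simp only [inner_add_left, inner_add_right, real_inner_smul_left, real_inner_smul_right,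
    hpp, h11, h22, h12, h21, h1p, h2p, hp1, hp2]
  ring

lemma norm_triple {p e₁ e₂ : E} (hp : ‖p‖ = 1) (h1 : ‖e₁‖ = 1) (h2 : ‖e₂‖ = 1)
    (h12 : ⟪e₁, e₂⟫ = 0) (h1p : ⟪e₁, p⟫ = 0) (h2p : ⟪e₂, p⟫ = 0)
    {a x y : ℝ} (h : a ^ 2 + x ^ 2 + y ^ 2 = 1) :
    ‖a • p + x • e₁ + y • e₂‖ = 1 := by
  have := inner_triple hp h1 h2 h12 h1p h2p a x y a x y
  have h2' : ‖a • p + x • e₁ + y • e₂‖ ^ 2 = 1 := by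
    rw [← real_inner_self_eq_norm_sq, this]; nlinarith
  nlinarith [norm_nonneg (a • p + x • e₁ + y • e₂)]

end aux

lemma exists_frame (ω : EuclideanSpace ℝ (Fin 3)) (hω : ‖ω‖ = 1) :
    ∃ e₁ e₂ : EuclideanSpace ℝ (Fin 3), ‖e₁‖ = 1 ∧ ‖e₂‖ = 1 ∧
      ⟪e₁, e₂⟫ = 0 ∧ ⟪e₁, ω⟫ = 0 ∧ ⟪e₂, ω⟫ = 0 := by
  have hfact : Fact (Module.finrank ℝ (EuclideanSpace ℝ (Fin 3)) = 2 + 1) :=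
    ⟨by simp⟩
  have hne : ω ≠ 0 := by intro h; rw [h] at hω; simp at hω
  let b := OrthonormalBasis.fromOrthogonalSpanSingleton (𝕜 := ℝ) 2 hne
  refine ⟨(b 0 : _), (b 1 : _), ?_, ?_, ?_, ?_, ?_⟩
  · exact b.orthonormal.1 0
  · exact b.orthonormal.1 1
  · exact b.orthonormal.2 (by decide : (0 : Fin 2) ≠ 1)
  · rw [real_inner_comm]; exact (b 0).2 ω (Submodule.mem_span_singleton_self ω)
  · rw [real_inner_comm]; exact (b 1).2 ω (Submodule.mem_span_singleton_self ω)

set_option maxHeartbeats 1000000 in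
lemma zonal_key (B U : EuclideanSpace ℝ (Fin 3) → ℝ)
    (hBc : Continuous B) (hBe : ∀ σ, B (-σ) = B σ)
    (hrel : ∀ ω e₁ e₂ : EuclideanSpace ℝ (Fin 3),
      ‖ω‖ = 1 → ‖e₁‖ = 1 → ‖e₂‖ = 1 →
      ⟪e₁, e₂⟫ = 0 → ⟪e₁, ω⟫ = 0 → ⟪e₂, ω⟫ = 0 →
      U ω = (1 / 2) * ∫ φ in (0:ℝ)..(2 * π), B (cos φ • e₁ + sin φ • e₂))
    (c : ℝ) (hU : ∀ ω ∈ sphere (0 : EuclideanSpace ℝ (Fin 3)) 1, U ω = c)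
    (p : EuclideanSpace ℝ (Fin 3)) (hp : ‖p‖ = 1) : B p = c / π := by
  obtain ⟨e₁, e₂, h1, h2, h12, h1p, h2p⟩ := exists_frame p hp
  have it := inner_triple hp h1 h2 h12 h1p h2p
  have nt := fun {a x y : ℝ} h => norm_triple hp h1 h2 h12 h1p h2p (a := a) (x := x) (y := y) h
  have hb : Continuous (fun a : ℝ => ∫ ψ in (0:ℝ)..(2*π),
      B (a • p + (Real.sqrt (1-a^2) * Real.cos ψ) • e₁
        + (Real.sqrt (1-a^2) * Real.sin ψ) • e₂)) := by
    apply intervalIntegral.continuous_parametric_intervalIntegral_of_continuous'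
      (f := fun a ψ => B (a • p + (Real.sqrt (1-a^2) * Real.cos ψ) • e₁
        + (Real.sqrt (1-a^2) * Real.sin ψ) • e₂))
    apply hBc.comp
    fun_prop
  set b : ℝ → ℝ := fun a => ∫ ψ in (0:ℝ)..(2*π),
      B (a • p + (Real.sqrt (1-a^2) * Real.cos ψ) • e₁
        + (Real.sqrt (1-a^2) * Real.sin ψ) • e₂) with hbdef
  -- periodicity helper
  have hper : ∀ a r : ℝ, Function.Periodic
      (fun ψ => B (a • p + (r * Real.cos ψ) • e₁ + (r * Real.sin ψ) • e₂)) (2*π) := by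
    intro a r ψ
    simp [Real.cos_add_two_pi, Real.sin_add_two_pi]
  -- b is even
  have hbeven : ∀ a, b (-a) = b a := by
    intro a
    have h0 : ∀ ψ : ℝ, B ((-a) • p + (Real.sqrt (1-(-a)^2) * Real.cos ψ) • e₁
        + (Real.sqrt (1-(-a)^2) * Real.sin ψ) • e₂)
        = B (a • p + (Real.sqrt (1-a^2) * Real.cos (ψ + π)) • e₁
          + (Real.sqrt (1-a^2) * Real.sin (ψ + π)) • e₂) := by
      intro ψ
      rw [Real.cos_add_pi, Real.sin_add_pi, neg_sq]
      rw [← hBe (a • p + (Real.sqrt (1-a^2) * -Real.cos ψ) • e₁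
          + (Real.sqrt (1-a^2) * -Real.sin ψ) • e₂)]
      exact congrArg B (by module)
    calc b (-a) = ∫ ψ in (0:ℝ)..(2*π), B (a • p + (Real.sqrt (1-a^2) * Real.cos (ψ + π)) • e₁
          + (Real.sqrt (1-a^2) * Real.sin (ψ + π)) • e₂) :=
          intervalIntegral.integral_congr (fun ψ _ => h0 ψ)
      _ = b a := shift_integral (hper a (Real.sqrt (1-a^2))) π
  -- the main identity
  have hval : ∀ s ∈ Set.Icc (0:ℝ) 1,
      (∫ φ in (0:ℝ)..(2*π), b (s * Real.sin φ)) = 4 * π * c := by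
    intro s hs
    set t : ℝ := Real.sqrt (1 - s^2) with htdef
    have ht2 : t^2 = 1 - s^2 := Real.sq_sqrt (by nlinarith [hs.1, hs.2])
    set G : ℝ → ℝ → ℝ := fun φ ψ =>
      B ((s * Real.sin φ) • p + (-(Real.cos φ * Real.sin ψ) - t * Real.sin φ * Real.cos ψ) • e₁
        + (Real.cos φ * Real.cos ψ - t * Real.sin φ * Real.sin ψ) • e₂) with hGdef
    have hGcont : Continuous fun q : ℝ × ℝ => G q.1 q.2 := by
      apply hBc.comp
      fun_prop
    have claim1 : ∀ ψ : ℝ, (∫ φ in (0:ℝ)..(2*π), G φ ψ) = 2 * c := by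
      intro ψ
      have hsc := Real.sin_sq_add_cos_sq ψ
      have hωn : ‖t • p + (s * Real.cos ψ) • e₁ + (s * Real.sin ψ) • e₂‖ = 1 :=
        nt (by nlinarith)
      have hf₁n : ‖(0:ℝ) • p + (-Real.sin ψ) • e₁ + (Real.cos ψ) • e₂‖ = 1 :=
        nt (by nlinarith)
      have hf₂n : ‖s • p + (-(t * Real.cos ψ)) • e₁ + (-(t * Real.sin ψ)) • e₂‖ = 1 :=
        nt (by nlinarith)
      have hi12 : ⟪(0:ℝ) • p + (-Real.sin ψ) • e₁ + (Real.cos ψ) • e₂,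
          s • p + (-(t * Real.cos ψ)) • e₁ + (-(t * Real.sin ψ)) • e₂⟫ = 0 := by
        rw [it]; ring
      have hi1ω : ⟪(0:ℝ) • p + (-Real.sin ψ) • e₁ + (Real.cos ψ) • e₂,
          t • p + (s * Real.cos ψ) • e₁ + (s * Real.sin ψ) • e₂⟫ = 0 := by
        rw [it]; ring
      have hi2ω : ⟪s • p + (-(t * Real.cos ψ)) • e₁ + (-(t * Real.sin ψ)) • e₂,
          t • p + (s * Real.cos ψ) • e₁ + (s * Real.sin ψ) • e₂⟫ = 0 := by
        rw [it]; linear_combination (-(s*t)) * hsc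
      have hrelω := hrel _ _ _ hωn hf₁n hf₂n hi12 hi1ω hi2ω
      have hUω : U (t • p + (s * Real.cos ψ) • e₁ + (s * Real.sin ψ) • e₂) = c :=
        hU _ (mem_sphere_zero_iff_norm.mpr hωn)
      have hint : (∫ φ in (0:ℝ)..(2*π),
          B (Real.cos φ • ((0:ℝ) • p + (-Real.sin ψ) • e₁ + (Real.cos ψ) • e₂)
            + Real.sin φ • (s • p + (-(t * Real.cos ψ)) • e₁ + (-(t * Real.sin ψ)) • e₂)))
          = 2 * c := by
        rw [hUω] at hrelω
        linarith
      rw [← hint]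
      apply intervalIntegral.integral_congr
      intro φ _
      simp only [hGdef]
      exact congrArg B (by module)
    have claim2 : ∀ φ : ℝ, (∫ ψ in (0:ℝ)..(2*π), G φ ψ) = b (s * Real.sin φ) := by
      intro φ
      have hsc := Real.sin_sq_add_cos_sq φ
      have hxy : (-(t * Real.sin φ))^2 + (Real.cos φ)^2 = 1 - (s * Real.sin φ)^2 := by
        nlinarith
      obtain ⟨δ, hx, hy⟩ := exists_angle (-(t * Real.sin φ)) (Real.cos φ)
      rw [hxy] at hx hy
      have hpt : ∀ ψ : ℝ, G φ ψ
          = B ((s * Real.sin φ) • p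
            + (Real.sqrt (1-(s * Real.sin φ)^2) * Real.cos (ψ + δ)) • e₁
            + (Real.sqrt (1-(s * Real.sin φ)^2) * Real.sin (ψ + δ)) • e₂) := by
        intro ψ
        simp only [hGdef]
        apply congrArg B
        have E1 : Real.sqrt (1-(s * Real.sin φ)^2) * Real.cos (ψ + δ)
            = -(Real.cos φ * Real.sin ψ) - t * Real.sin φ * Real.cos ψ := by
          rw [Real.cos_add]
          linear_combination (-(Real.cos ψ)) * hx + Real.sin ψ * hy
        have E2 : Real.sqrt (1-(s * Real.sin φ)^2) * Real.sin (ψ + δ)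
            = Real.cos φ * Real.cos ψ - t * Real.sin φ * Real.sin ψ := by
          rw [Real.sin_add]
          linear_combination (-(Real.sin ψ)) * hx + (-(Real.cos ψ)) * hy
        rw [E1, E2]
      calc (∫ ψ in (0:ℝ)..(2*π), G φ ψ)
          = ∫ ψ in (0:ℝ)..(2*π), B ((s * Real.sin φ) • p
            + (Real.sqrt (1-(s * Real.sin φ)^2) * Real.cos (ψ + δ)) • e₁
            + (Real.sqrt (1-(s * Real.sin φ)^2) * Real.sin (ψ + δ)) • e₂) :=
            intervalIntegral.integral_congr (fun ψ _ => hpt ψ)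
        _ = b (s * Real.sin φ) :=
            shift_integral (hper (s * Real.sin φ) (Real.sqrt (1-(s * Real.sin φ)^2))) δ
    calc (∫ φ in (0:ℝ)..(2*π), b (s * Real.sin φ))
        = ∫ φ in (0:ℝ)..(2*π), ∫ ψ in (0:ℝ)..(2*π), G φ ψ :=
          (intervalIntegral.integral_congr (fun φ _ => (claim2 φ).symm))
      _ = ∫ ψ in (0:ℝ)..(2*π), ∫ φ in (0:ℝ)..(2*π), G φ ψ :=
          fubini_box hGcont (by positivity) (by positivity)
      _ = ∫ ψ in (0:ℝ)..(2*π), (2*c) :=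
          intervalIntegral.integral_congr (fun ψ _ => claim1 ψ)
      _ = 4 * π * c := by
          rw [intervalIntegral.integral_const]
          simp only [sub_zero, smul_eq_mul]
          ring
  -- b 0 = 2c
  have hb0 : b 0 = 2 * c := by
    have hrelp := hrel p e₁ e₂ hp h1 h2 h12 h1p h2p
    have hUp : U p = c := hU p (mem_sphere_zero_iff_norm.mpr hp)
    rw [hUp] at hrelp
    have hint : (∫ φ in (0:ℝ)..(2*π), B (Real.cos φ • e₁ + Real.sin φ • e₂)) = 2 * c := by
      linarith
    rw [hbdef, ← hint]
    apply intervalIntegral.integral_congr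
    intro ψ _
    apply congrArg B
    rw [show (1:ℝ) - 0^2 = 1 by ring, Real.sqrt_one]
    module
  -- b 1 = 2π B p
  have hb1 : b 1 = 2 * π * B p := by
    have hpt : ∀ ψ : ℝ, B ((1:ℝ) • p + (Real.sqrt (1-(1:ℝ)^2) * Real.cos ψ) • e₁
        + (Real.sqrt (1-(1:ℝ)^2) * Real.sin ψ) • e₂) = B p := by
      intro ψ
      apply congrArg B
      rw [show (1:ℝ) - 1^2 = 0 by ring, Real.sqrt_zero]
      module
    calc b 1 = ∫ ψ in (0:ℝ)..(2*π), B p :=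
          intervalIntegral.integral_congr (fun ψ _ => hpt ψ)
      _ = 2 * π * B p := by
          rw [intervalIntegral.integral_const]
          simp only [sub_zero, smul_eq_mul]
          try ring
  -- apply abel_unique to h := b - 2c
  have habel := abel_unique (fun u => b u - 2*c) (hb.sub continuous_const)
    (fun x => by simp only [hbeven x])
    (by
      intro s hs
      have hbi : IntervalIntegrable (fun φ => b (s * Real.sin φ)) volume 0 (2*π) :=
        (hb.comp (by fun_prop)).intervalIntegrable _ _
      rw [intervalIntegral.integral_sub hbi (intervalIntegrable_const)]
      rw [hval s hs, intervalIntegral.integral_const]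
      simp only [sub_zero, smul_eq_mul]
      ring)
  have hfin : b 1 = 2 * c := by
    simp only [sub_eq_zero] at habel
    exact habel
  rw [hb1] at hfin
  have hπ : π ≠ 0 := Real.pi_ne_zero
  field_simp
  linarith

/-- Minkowski's theorem via the Funk transform: Let `B` be the (continuous,
even) width function and `U` the circumference function of a compact convex body in `ℝ³`
with smooth boundary and `0` in its interior, related by `U ω = (1/2) ∫_{S² ∩ ω^⊥} B ds`
(the great circle being parametrized by arc length as `φ ↦ cos φ • e₁ + sin φ • e₂`).
If `B ≡ c` then `U ≡ π c`; and `U` is constant on `S²` iff `B` is constant on `S²`: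
the body has constant width iff it has constant circumference. -/
theorem minkowski_constant_width_iff_constant_circumference
    (B U : EuclideanSpace ℝ (Fin 3) → ℝ)
    (hBc : Continuous B) (hBe : ∀ σ, B (-σ) = B σ)
    (hrel : ∀ ω e₁ e₂ : EuclideanSpace ℝ (Fin 3),
      ‖ω‖ = 1 → ‖e₁‖ = 1 → ‖e₂‖ = 1 →
      ⟪e₁, e₂⟫ = 0 → ⟪e₁, ω⟫ = 0 → ⟪e₂, ω⟫ = 0 →
      U ω = (1 / 2) * ∫ φ in (0:ℝ)..(2 * π), B (cos φ • e₁ + sin φ • e₂)) :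
    (∀ c : ℝ, (∀ σ ∈ sphere (0 : EuclideanSpace ℝ (Fin 3)) 1, B σ = c) →
        ∀ ω ∈ sphere (0 : EuclideanSpace ℝ (Fin 3)) 1, U ω = π * c) ∧
    ((∃ c : ℝ, ∀ ω ∈ sphere (0 : EuclideanSpace ℝ (Fin 3)) 1, U ω = c) ↔
     (∃ c : ℝ, ∀ σ ∈ sphere (0 : EuclideanSpace ℝ (Fin 3)) 1, B σ = c)) := by
  have part1 : ∀ c : ℝ, (∀ σ ∈ sphere (0 : EuclideanSpace ℝ (Fin 3)) 1, B σ = c) →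
      ∀ ω ∈ sphere (0 : EuclideanSpace ℝ (Fin 3)) 1, U ω = π * c := by
    intro c hBconst ω hω
    rw [mem_sphere_zero_iff_norm] at hω
    obtain ⟨e₁, e₂, h1, h2, h12, h1ω, h2ω⟩ := exists_frame ω hω
    rw [hrel ω e₁ e₂ hω h1 h2 h12 h1ω h2ω]
    have hc : ∀ φ : ℝ, B (Real.cos φ • e₁ + Real.sin φ • e₂) = c := by
      intro φ
      apply hBconst
      rw [mem_sphere_zero_iff_norm]
      have hn := norm_triple hω h1 h2 h12 h1ω h2ω (a := 0) (x := Real.cos φ)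
        (y := Real.sin φ) (by nlinarith [Real.sin_sq_add_cos_sq φ])
      rw [show (0:ℝ) • ω + Real.cos φ • e₁ + Real.sin φ • e₂
          = Real.cos φ • e₁ + Real.sin φ • e₂ by module] at hn
      exact hn
    rw [intervalIntegral.integral_congr (fun φ _ => hc φ),
      intervalIntegral.integral_const]
    simp only [sub_zero, smul_eq_mul]
    ring
  refine ⟨part1, ?_, ?_⟩
  · rintro ⟨c, hUconst⟩
    exact ⟨c / π, fun σ hσ => zonal_key B U hBc hBe hrel c hUconst σ
      (mem_sphere_zero_iff_norm.mp hσ)⟩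
  · rintro ⟨c, hBconst⟩
    exact ⟨π * c, part1 c hBconst⟩
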